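/- Let F ∈ K[x_0,...,x_n]_d be a homogeneous polynomial of degree d and suppose each first partial derivative F_{x_t} admits a decomposition F_{x_t} = Σ_{i=1}^h α_i^t L_i^{d-1}, where L_i = A_i^0 x_0 + ... + A_i^n x_n are linear forms such that L_1^{d-2},...,L_h^{d-2} are linearly independent in K[x_0,...,x_n]_{d-2}. Then the coefficients satisfy the relations α_i^t A_i^s = α_i^s A_i^t for all t,s = 0,...,n and i = 1,...,h. -/

import Mathlib

open MvPolynomial

/-- The iterated partial derivative operator associated to a multi-index `σ`. -/
noncomputable def pd (K : Type) [CommSemiring K] {m : ℕ} (σ : Fin m → ℕ) :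
    Module.End K (MvPolynomial (Fin m) K) :=
  (List.ofFn (fun j : Fin m =>
    ((MvPolynomial.pderiv (R := K) j).toLinearMap ^ (σ j) :
      Module.End K (MvPolynomial (Fin m) K)))).prod

/-- The linear form with coefficient vector `a`. -/
noncomputable def lform {K : Type} [CommSemiring K] {m : ℕ} (a : Fin m → K) :
    MvPolynomial (Fin m) K :=
  ∑ j, MvPolynomial.C (a j) * MvPolynomial.X j

lemma pderiv_comm' {K : Type} [CommSemiring K] {m : ℕ} (s t : Fin m)
    (p : MvPolynomial (Fin m) K) :
    pderiv s (pderiv t p) = pderiv t (pderiv s p) := by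
  induction p using MvPolynomial.induction_on' with
  | monomial u a =>
    rcases eq_or_ne s t with rfl | hst
    · rfl
    · simp only [pderiv_monomial]
      rw [tsub_right_comm]
      congr 1
      have h1 : ((u - Finsupp.single t 1 : Fin m →₀ ℕ)) s = u s := by
        simp [Finsupp.tsub_apply, Finsupp.single_apply, hst.symm]
      have h2 : ((u - Finsupp.single s 1 : Fin m →₀ ℕ)) t = u t := by
        simp [Finsupp.tsub_apply, Finsupp.single_apply, hst]
      rw [h1, h2]; ring
  | add p q hp hq => simp [map_add, hp, hq]

lemma pderiv_lform {K : Type} [CommSemiring K] {m : ℕ} (a : Fin m → K) (s : Fin m) :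
    pderiv s (lform a) = C (a s) := by
  rw [lform, map_sum]
  rw [Finset.sum_eq_single s]
  · simp
  · intro j _ hj; simp [pderiv_X_of_ne hj]
  · simp

/-- If every first partial derivative of a homogeneous `F` of degree `d` decomposes as
`F_{x_t} = ∑_i α_i^t L_i^{d-1}`, with `L_i = ∑_j A_i^j x_j` such that the powers `L_i^{d-2}`
are linearly independent, then `α_i^t A_i^s = α_i^s A_i^t` for all `t, s, i`. -/
theorem stmt2 {K : Type} [Field K] [CharZero K] (n d h : ℕ) (hd : 2 ≤ d)
    (F : MvPolynomial (Fin (n + 1)) K) (hF : F.IsHomogeneous d)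
    (α A : Fin h → Fin (n + 1) → K)
    (hdec : ∀ t : Fin (n + 1),
      MvPolynomial.pderiv t F = ∑ i : Fin h, MvPolynomial.C (α i t) * (lform (A i)) ^ (d - 1))
    (hind : LinearIndependent K (fun i : Fin h => (lform (A i)) ^ (d - 2))) :
    ∀ (t s : Fin (n + 1)) (i : Fin h), α i t * A i s = α i s * A i t := by
  intro t s i
  have e : d - 1 - 1 = d - 2 := by omega
  have H : pderiv s (pderiv t F) = pderiv t (pderiv s F) := pderiv_comm' s t F
  rw [hdec t, hdec s, map_sum, map_sum] at H
  simp only [pderiv_C_mul, pderiv_pow, pderiv_lform, e] at H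
  have hg := Fintype.linearIndependent_iff.mp hind
      (fun i => ((d - 1 : ℕ) : K) * (α i t * A i s - α i s * A i t)) ?_ i
  · have hdK : ((d - 1 : ℕ) : K) ≠ 0 := by
      have : d - 1 ≠ 0 := by omega
      exact_mod_cast Nat.cast_ne_zero.mpr this
    have := mul_eq_zero.mp hg
    rcases this with h' | h'
    · exact absurd h' hdK
    · exact sub_eq_zero.mp h'
  · rw [← sub_eq_zero] at H
    rw [← H, ← Finset.sum_sub_distrib]
    congr 1
    funext j
    rw [smul_eq_C_mul]
    simp only [map_sub, map_mul, C_eq_coe_nat]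
    ring
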